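/- arXiv:2201.12674 — 2 statements merged into one kernel-verified Lean document; each statement's English description precedes it below -/
import Mathlib

section
/- (Injectivity of rewiring with shortest-path positional encoding.) Let G₁ and G₂ be simple graphs on the same finite vertex set V and let r ≥ 1. Suppose the r-hop rewired graphs (G₁)'_r and (G₂)'_r are equal, and for every edge {u,v} of this common rewired graph the shortest-path encodings agree, i.e., dist_{G₁}(u,v) = dist_{G₂}(u,v). Then G₁ = G₂. -/
open SimpleGraph

/-- The `r`-hop rewired graph `G'_r`: distinct vertices `u`, `v` are adjacent iff
they are connected in `G` and `0 < dist_G(u,v) ≤ r`. -/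
def rewire {V : Type*} (G : SimpleGraph V) (r : ℕ) : SimpleGraph V where
  Adj u v := u ≠ v ∧ G.Reachable u v ∧ 0 < G.dist u v ∧ G.dist u v ≤ r
  symm := by
    constructor
    rintro u v ⟨h1, h2, h3, h4⟩
    exact ⟨h1.symm, h2.symm, by rwa [SimpleGraph.dist_comm], by rwa [SimpleGraph.dist_comm]⟩
  loopless := by
    constructor
    rintro u ⟨h1, -⟩
    exact h1 rfl

theorem stmt_3 {V : Type*} [Fintype V] (G₁ G₂ : SimpleGraph V) (r : ℕ) (hr : 1 ≤ r)
    (hrew : rewire G₁ r = rewire G₂ r)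
    (henc : ∀ u v : V, (rewire G₁ r).Adj u v → G₁.dist u v = G₂.dist u v) :
    G₁ = G₂ := by
  ext u v
  constructor
  · intro h
    have hd1 : G₁.dist u v = 1 := (dist_eq_one_iff_adj (G := G₁)).mpr h
    have hadj : (rewire G₁ r).Adj u v :=
      ⟨h.ne, h.reachable, by omega, by omega⟩
    have := henc u v hadj
    exact (dist_eq_one_iff_adj (G := G₂)).mp (by omega)
  · intro h
    have hd2 : G₂.dist u v = 1 := (dist_eq_one_iff_adj (G := G₂)).mpr h
    have hadj : (rewire G₂ r).Adj u v :=
      ⟨h.ne, h.reachable, by omega, by omega⟩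
    have hadj1 : (rewire G₁ r).Adj u v := by rw [hrew]; exact hadj
    have := henc u v hadj1
    exact (dist_eq_one_iff_adj (G := G₁)).mp (by omega)
end

section
/- (Alleviation of under-reaching by r-hop rewiring.) Let G be a simple graph on a finite vertex set V, let r ≥ 1, and let u, v be vertices connected in G. Then the shortest-path distance between u and v in the r-hop rewired graph G'_r equals ⌈dist_G(u,v) / r⌉; in particular, dist_{G'_r}(u,v) ≤ ⌈dist_G(u,v) / r⌉ and dist_G(u,v) ≤ r · dist_{G'_r}(u,v). -/
open SimpleGraph

lemma dist_tri {V : Type*} {G : SimpleGraph V} {u v w : V}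
    (h1 : G.Reachable u v) (h2 : G.Reachable v w) :
    G.dist u w ≤ G.dist u v + G.dist v w := by
  obtain ⟨p, hp⟩ := h1.exists_walk_length_eq_dist
  obtain ⟨q, hq⟩ := h2.exists_walk_length_eq_dist
  calc G.dist u w ≤ (p.append q).length := SimpleGraph.dist_le _
    _ = _ := by rw [Walk.length_append, hp, hq]

lemma reach_of_dist_pos {V : Type*} {G : SimpleGraph V} {u v : V}
    (h : 0 < G.dist u v) : G.Reachable u v := by
  by_contra hn
  simp [SimpleGraph.dist_eq_zero_of_not_reachable hn] at h

lemma step {V : Type*} {G : SimpleGraph V} {u v : V} (h : 0 < G.dist u v) :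
    ∃ w, G.Adj u w ∧ G.dist w v + 1 = G.dist u v := by
  obtain ⟨p, hp⟩ := (reach_of_dist_pos h).exists_walk_length_eq_dist
  cases p with
  | nil => simp [← hp] at h
  | cons ha q =>
    refine ⟨_, ha, le_antisymm ?_ ?_⟩
    · have := SimpleGraph.dist_le q
      simp [Walk.length_cons] at hp
      omega
    · obtain ⟨q', hq'⟩ := q.reachable.exists_walk_length_eq_dist
      have := SimpleGraph.dist_le (Walk.cons ha q')
      simp [Walk.length_cons, hq'] at this
      omega

lemma steps {V : Type*} {G : SimpleGraph V} (k : ℕ) : ∀ {u v : V}, k ≤ G.dist u v →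
    ∃ w, G.Reachable u w ∧ G.dist u w = k ∧ G.dist w v + k = G.dist u v := by
  induction k with
  | zero => intro u v _; exact ⟨u, Reachable.refl _, by simp, by simp⟩
  | succ k ih =>
    intro u v hk
    obtain ⟨w, hreach_uw, hw1, hw2⟩ := ih (le_trans (Nat.le_succ k) hk)
    obtain ⟨x, hx, hx2⟩ := step (by omega : 0 < G.dist w v)
    have hwx : G.Reachable w x := hx.reachable
    have hxv : G.Reachable x v := hwx.symm.trans (reach_of_dist_pos (by omega : 0 < G.dist w v))
    have hdwx : G.dist w x ≤ 1 := (SimpleGraph.dist_le hx.toWalk).trans (by simp)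
    have h2 : G.dist u x ≤ k + 1 := by
      have := dist_tri hreach_uw hwx
      omega
    have h1 := dist_tri (hreach_uw.trans hwx) hxv
    exact ⟨x, hreach_uw.trans hwx, by omega, by omega⟩

lemma reach_rewire {V : Type*} {G : SimpleGraph V} {r : ℕ} (hr : 1 ≤ r) {u v : V}
    (h : G.Reachable u v) : (rewire G r).Reachable u v := by
  have hle : G ≤ rewire G r := by
    intro a b hab
    have hpos : 0 < G.dist a b :=
      Nat.pos_of_ne_zero fun h0 => hab.ne (hab.reachable.dist_eq_zero_iff.mp h0)
    have hle : G.dist a b ≤ 1 := (SimpleGraph.dist_le hab.toWalk).trans (by simp)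
    exact ⟨hab.ne, hab.reachable, hpos, by omega⟩
  exact h.mono hle

lemma rewire_le {V : Type*} (G : SimpleGraph V) (r : ℕ) (hr : 1 ≤ r) :
    ∀ d, ∀ u v : V, G.Reachable u v → G.dist u v = d →
    (rewire G r).dist u v ≤ d ⌈/⌉ r := by
  intro d
  induction d using Nat.strong_induction_on with
  | _ d ih =>
    intro u v hreach hd
    rcases Nat.eq_zero_or_pos d with h0 | hpos
    · subst h0
      have : u = v := (hreach.dist_eq_zero_iff).mp hd
      subst this; simp
    rcases le_or_gt d r with hle | hgt
    · have hadj : (rewire G r).Adj u v := by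
        refine ⟨?_, hreach, by omega, by omega⟩
        rintro rfl; simp [SimpleGraph.dist_self] at hd; omega
      have h1 : (rewire G r).dist u v ≤ 1 := by
        have := SimpleGraph.dist_le hadj.toWalk; simpa using this
      have : 1 ≤ d ⌈/⌉ r := by
        rw [Nat.ceilDiv_eq_add_pred_div]
        have : r ≤ d + r - 1 := by omega
        have := (Nat.one_le_div_iff (by omega : 0 < r)).mpr this
        omega
      omega
    · obtain ⟨w, hruw, hw1, hw2⟩ := steps r (by omega : r ≤ G.dist u v)
      have hreach_uw : G.Reachable u w := reach_of_dist_pos (by omega)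
      have hreach_wv : G.Reachable w v := reach_of_dist_pos (by omega)
      have hadj : (rewire G r).Adj u w := by
        refine ⟨?_, hreach_uw, by omega, by omega⟩
        rintro rfl; simp [SimpleGraph.dist_self] at hw1; omega
      have ihw : (rewire G r).dist w v ≤ (d - r) ⌈/⌉ r :=
        ih (d - r) (by omega) w v hreach_wv (by omega)
      obtain ⟨q, hq⟩ := (reach_rewire hr hreach_wv).exists_walk_length_eq_dist
      have hle2 : (rewire G r).dist u v ≤ (rewire G r).dist w v + 1 := by
        have := SimpleGraph.dist_le (Walk.cons hadj q)
        simp [Walk.length_cons, hq] at this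
        omega
      have harith : (d - r) ⌈/⌉ r + 1 = d ⌈/⌉ r := by
        rw [Nat.ceilDiv_eq_add_pred_div, Nat.ceilDiv_eq_add_pred_div]
        have h1 : d - r + r - 1 = d - 1 := by omega
        have h2 : d + r - 1 = (d - 1) + r := by omega
        rw [h1, h2, Nat.add_div_right _ (by omega : 0 < r)]
      omega

lemma rewire_walk_lb {V : Type*} {G : SimpleGraph V} {r : ℕ} :
    ∀ {u v : V} (p : (rewire G r).Walk u v),
    G.Reachable u v ∧ G.dist u v ≤ r * p.length := by
  intro u v p
  induction p with
  | nil => exact ⟨Reachable.refl _, by simp⟩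
  | @cons a b c h q ih =>
    obtain ⟨hbc, hd⟩ := ih
    obtain ⟨-, hab, -, habr⟩ := id h
    refine ⟨hab.trans hbc, ?_⟩
    have := dist_tri hab hbc
    simp [Walk.length_cons]
    ring_nf
    omega

theorem stmt_7 {V : Type*} [Fintype V] (G : SimpleGraph V) (r : ℕ) (hr : 1 ≤ r)
    (u v : V) (hconn : G.Reachable u v) :
    (rewire G r).dist u v = G.dist u v ⌈/⌉ r ∧
    (rewire G r).dist u v ≤ G.dist u v ⌈/⌉ r ∧
    G.dist u v ≤ r * (rewire G r).dist u v := by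
  have hub : (rewire G r).dist u v ≤ G.dist u v ⌈/⌉ r :=
    rewire_le G r hr _ u v hconn rfl
  obtain ⟨p, hp⟩ := (reach_rewire hr hconn).exists_walk_length_eq_dist
  have hlb : G.dist u v ≤ r * (rewire G r).dist u v := by
    have := (rewire_walk_lb p).2
    rwa [hp] at this
  have heq : (rewire G r).dist u v = G.dist u v ⌈/⌉ r := by
    refine le_antisymm hub ?_
    rw [Nat.ceilDiv_eq_add_pred_div]
    rw [Nat.div_le_iff_le_mul_add_pred (by omega : 0 < r)]
    omega
  exact ⟨heq, hub, hlb⟩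
end
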